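/- Let E : A → P be an approximately representable conditional expectation of finite index. If P is simple, then the inclusion P ⊆ A is irreducible (P' ∩ A ≅ ℂ) and A is simple. -/

import Mathlib

set_option linter.unusedSectionVars false
set_option maxHeartbeats 1000000

/-- A conditional expectation from a unital C*-algebra `A` onto a C*-subalgebra `P`. -/
structure IsCondExp {A : Type*} [NormedRing A] [StarRing A] [CStarRing A]
    [NormedAlgebra ℂ A] [CompleteSpace A] [StarModule ℂ A] [PartialOrder A]
    [StarOrderedRing A] (P : StarSubalgebra ℂ A) (E : A → A) : Prop where
  map_add : ∀ x y : A, E (x + y) = E x + E y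
  map_smul : ∀ (c : ℂ) (x : A), E (c • x) = c • E x
  mem : ∀ x : A, E x ∈ P
  fix : ∀ x ∈ P, E x = x
  bimod : ∀ p ∈ P, ∀ q ∈ P, ∀ x : A, E (p * x * q) = p * E x * q
  star_map : ∀ x : A, E (star x) = star (E x)
  pos : ∀ x : A, 0 ≤ E (star x * x)

/-- A quasi-basis `{(u i, v i)}` for a conditional expectation `E`. -/
def IsQuasiBasis {A : Type*} [Ring A] (E : A → A) {n : ℕ} (u v : Fin n → A) : Prop :=
  ∀ a : A, (a = ∑ i, u i * E (v i * a)) ∧ (a = ∑ i, E (a * u i) * v i)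

/-- A sequence `(a n)` in a normed space is bounded. -/
def IsBddSeq {A : Type*} [Norm A] (a : ℕ → A) : Prop := ∃ C : ℝ, ∀ n, ‖a n‖ ≤ C

/-- Data exhibiting the algebra `Ainf` as the quotient `A^∞ = ℓ^∞(ℕ, A)/c₀(A)` of
bounded sequences in `A` modulo null sequences; `q` is the quotient map (its values
on unbounded sequences are irrelevant). -/
structure SeqAlg (A : Type*) [NormedRing A] [StarRing A] [NormedAlgebra ℂ A]
    (Ainf : Type*) [Ring Ainf] [StarRing Ainf] [Algebra ℂ Ainf] where
  q : (ℕ → A) → Ainf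
  surj : ∀ z : Ainf, ∃ a : ℕ → A, IsBddSeq a ∧ q a = z
  q_add : ∀ a b : ℕ → A, IsBddSeq a → IsBddSeq b → q (a + b) = q a + q b
  q_mul : ∀ a b : ℕ → A, IsBddSeq a → IsBddSeq b → q (a * b) = q a * q b
  q_smul : ∀ (c : ℂ) (a : ℕ → A), IsBddSeq a → q (c • a) = c • q a
  q_star : ∀ a : ℕ → A, IsBddSeq a → q (star a) = star (q a)
  q_one : q 1 = 1
  q_eq_zero_iff : ∀ a : ℕ → A, IsBddSeq a →
    (q a = 0 ↔ Filter.Tendsto (fun n => ‖a n‖) Filter.atTop (nhds 0))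

/-- The canonical embedding of `A` into `Ainf` as (classes of) constant sequences. -/
def SeqAlg.incl {A : Type*} [NormedRing A] [StarRing A] [NormedAlgebra ℂ A]
    {Ainf : Type*} [Ring Ainf] [StarRing Ainf] [Algebra ℂ Ainf]
    (S : SeqAlg A Ainf) (x : A) : Ainf := S.q fun _ => x

/-- A C*-algebra is simple if it has no nontrivial closed two-sided ideals. -/
def IsSimpleCStarAlgebra (A : Type*) [NonUnitalNonAssocRing A] [TopologicalSpace A] :
    Prop :=
  ∀ I : TwoSidedIdeal A, IsClosed (I : Set A) → I = ⊥ ∨ I = ⊤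

open Filter Topology

section BddAux

variable {A : Type*} [NormedRing A] [StarRing A] [NormedAlgebra ℂ A]

lemma IsBddSeq.const (x : A) : IsBddSeq (fun _ : ℕ => x) := ⟨‖x‖, fun _ => le_rfl⟩

lemma IsBddSeq.mul {a b : ℕ → A} (ha : IsBddSeq a) (hb : IsBddSeq b) : IsBddSeq (a * b) := by
  obtain ⟨C, hC⟩ := ha
  obtain ⟨D, hD⟩ := hb
  refine ⟨max C 0 * max D 0, fun n => ?_⟩
  calc ‖(a * b) n‖ = ‖a n * b n‖ := rfl
    _ ≤ ‖a n‖ * ‖b n‖ := norm_mul_le _ _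
    _ ≤ max C 0 * max D 0 :=
      mul_le_mul ((hC n).trans (le_max_left _ _)) ((hD n).trans (le_max_left _ _))
        (norm_nonneg _) (le_max_right _ _)

lemma IsBddSeq.add {a b : ℕ → A} (ha : IsBddSeq a) (hb : IsBddSeq b) : IsBddSeq (a + b) := by
  obtain ⟨C, hC⟩ := ha
  obtain ⟨D, hD⟩ := hb
  exact ⟨C + D, fun n => (norm_add_le _ _).trans (add_le_add (hC n) (hD n))⟩

lemma IsBddSeq.smul (c : ℂ) {a : ℕ → A} (ha : IsBddSeq a) : IsBddSeq (c • a) := by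
  obtain ⟨C, hC⟩ := ha
  refine ⟨‖c‖ * max C 0, fun n => ?_⟩
  calc ‖(c • a) n‖ = ‖c‖ * ‖a n‖ := norm_smul c (a n)
    _ ≤ ‖c‖ * max C 0 :=
      mul_le_mul_of_nonneg_left ((hC n).trans (le_max_left _ _)) (norm_nonneg c)

lemma IsBddSeq.star' [NormedStarGroup A] {a : ℕ → A} (ha : IsBddSeq a) :
    IsBddSeq (star a) := by
  obtain ⟨C, hC⟩ := ha
  exact ⟨C, fun n => by simpa only [Pi.star_apply, norm_star] using hC n⟩

lemma IsBddSeq.sub {a b : ℕ → A} (ha : IsBddSeq a) (hb : IsBddSeq b) : IsBddSeq (a - b) := by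
  have h : a - b = a + (-1 : ℂ) • b := by
    funext k
    simp [sub_eq_add_neg]
  rw [h]
  exact ha.add (hb.smul _)

end BddAux

section SeqAux

variable {A : Type*} [NormedRing A] [StarRing A] [NormedAlgebra ℂ A]
variable {Ainf : Type*} [Ring Ainf] [StarRing Ainf] [Algebra ℂ Ainf]
variable (S : SeqAlg A Ainf)

lemma SeqAlg.q_sub {a b : ℕ → A} (ha : IsBddSeq a) (hb : IsBddSeq b) :
    S.q (a - b) = S.q a - S.q b := by
  have h : a - b = a + (-1 : ℂ) • b := by
    funext k
    simp [sub_eq_add_neg]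
  rw [h, S.q_add _ _ ha (hb.smul _), S.q_smul _ _ hb, neg_one_smul, sub_eq_add_neg]

lemma SeqAlg.tendsto_of_q_eq {a b : ℕ → A} (ha : IsBddSeq a) (hb : IsBddSeq b)
    (h : S.q a = S.q b) : Tendsto (fun k => ‖a k - b k‖) atTop (nhds 0) := by
  have h0 : S.q (a - b) = 0 := by rw [S.q_sub ha hb, h, sub_self]
  exact (S.q_eq_zero_iff _ (ha.sub hb)).mp h0

lemma SeqAlg.incl_mul (x y : A) : S.incl (x * y) = S.incl x * S.incl y := by
  rw [SeqAlg.incl, SeqAlg.incl, SeqAlg.incl, ← S.q_mul _ _ (IsBddSeq.const x) (IsBddSeq.const y)]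
  rfl

lemma SeqAlg.incl_sub (x y : A) : S.incl (x - y) = S.incl x - S.incl y := by
  rw [SeqAlg.incl, SeqAlg.incl, SeqAlg.incl, ← S.q_sub (IsBddSeq.const x) (IsBddSeq.const y)]
  rfl

lemma SeqAlg.incl_eq_zero {x : A} (h : S.incl x = 0) : x = 0 := by
  have := (S.q_eq_zero_iff _ (IsBddSeq.const x)).mp h
  have h2 : ‖x‖ = 0 := tendsto_nhds_unique tendsto_const_nhds this
  exact norm_eq_zero.mp h2

end SeqAux

section RingAux

/-- if `a` commutes with `b` and `a*b` is a unit then `a` is a unit. -/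
lemma isUnit_of_commute_mul {A : Type*} [Ring A] {a b : A} (hc : a * b = b * a)
    (h : IsUnit (a * b)) : IsUnit a := by
  obtain ⟨u, hu⟩ := h
  have hcu : Commute a (u : A) := by
    rw [hu]
    show a * (a * b) = (a * b) * a
    rw [hc, ← mul_assoc, hc]
  have hinv : Commute a ((u⁻¹ : Aˣ) : A) := hcu.units_inv_right
  refine ⟨⟨a, b * ((u⁻¹ : Aˣ) : A), ?_, ?_⟩, rfl⟩
  · rw [← mul_assoc, ← hu]
    exact u.mul_inv
  · rw [mul_assoc, ← hinv.eq, ← mul_assoc, ← hc, ← hu]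
    exact u.mul_inv

/-- an idempotent close enough to a closed two-sided ideal belongs to it. -/
lemma idem_mem_of_close {A : Type*} [NormedRing A] (I : TwoSidedIdeal A)
    (hI : IsClosed (I : Set A)) {r j : A} (hj : j ∈ I) (hr : r * r = r)
    (hd : ‖r - j‖ < 1) : r ∈ I := by
  have hmem : ∀ k : ℕ, r - (r - j) ^ (k + 1) ∈ I := by
    intro k
    induction k with
    | zero => simpa using hj
    | succ k ih =>
      have hstep : r - (r - j) ^ (k + 2) =
          (r - (r - j) ^ (k + 1)) * r + (r - j) ^ (k + 1) * j := by
        have h1 : (r - (r - j) ^ (k + 1)) * r = r - (r - j) ^ (k + 1) * r := by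
          rw [sub_mul, hr]
        rw [h1, pow_succ, mul_sub]
        abel
      rw [hstep]
      exact I.add_mem (I.mul_mem_right _ _ ih) (I.mul_mem_left _ _ hj)
  have hlim : Tendsto (fun k : ℕ => r - (r - j) ^ (k + 1)) atTop (nhds r) := by
    rw [tendsto_iff_norm_sub_tendsto_zero]
    have hb : ∀ k : ℕ, ‖r - (r - j) ^ (k + 1) - r‖ ≤ ‖r - j‖ ^ (k + 1) := by
      intro k
      rw [sub_sub_cancel_left, norm_neg]
      exact norm_pow_le' _ (Nat.succ_pos k)
    have hpow : Tendsto (fun k : ℕ => ‖r - j‖ ^ (k + 1)) atTop (nhds 0) :=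
      (tendsto_pow_atTop_nhds_zero_of_lt_one (norm_nonneg _) hd).comp
        (tendsto_add_atTop_nat 1)
    exact squeeze_zero (fun k => norm_nonneg _) hb hpow
  have := hI.mem_of_tendsto hlim (Eventually.of_forall hmem)
  exact this

end RingAux

section NewtonAux

/-- Newton iteration: near-idempotents in a closed subalgebra are close to idempotents in it. -/
lemma newton_idem {A : Type*} [NormedRing A] [StarRing A] [NormedAlgebra ℂ A]
    [StarModule ℂ A] [CompleteSpace A]
    (P : StarSubalgebra ℂ A) (hP : IsClosed (P : Set A)) (hone : ‖(1 : A)‖ ≤ 1)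
    {b : A} (hb : b ∈ P) {ε : ℝ} (h0 : 0 ≤ ε) (hεs : ε ≤ 1 / 1000)
    (hdef : ‖b * b - b‖ ≤ ε) (hnb : ‖b‖ ≤ 3 / 2) :
    ∃ r : A, r ∈ P ∧ r * r = r ∧ ‖r - b‖ ≤ 10 * ε := by
  set f : A → A := fun y => (y * y + y * y + y * y) - (y * y * y + y * y * y) with hf
  set x : ℕ → A := fun k => f^[k] b with hx
  have hx0 : x 0 = b := rfl
  have hxs : ∀ k, x (k + 1) = f (x k) := fun k => Function.iterate_succ_apply' f k b
  have hmem : ∀ k, x k ∈ P := by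
    intro k
    induction k with
    | zero => exact hb
    | succ k ih =>
      rw [hxs]
      exact sub_mem (add_mem (add_mem (mul_mem ih ih) (mul_mem ih ih)) (mul_mem ih ih))
        (add_mem (mul_mem (mul_mem ih ih) ih) (mul_mem (mul_mem ih ih) ih))
  -- identities
  have hid1 : ∀ y : A, f y - y = (1 - (y + y)) * (y * y - y) := by
    intro y
    rw [hf]
    noncomm_ring
  have hid2 : ∀ y : A, f y * f y - f y =
      ((y + y - 1) * (y + y - 1) - 4) * ((y * y - y) * (y * y - y)) := by
    intro y
    rw [hf]
    noncomm_ring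
  have h4 : ‖(4 : A)‖ ≤ 4 := by
    have h41 : (4 : A) = 1 + 1 + 1 + 1 := by norm_num
    rw [h41]
    calc ‖(1 : A) + 1 + 1 + 1‖ ≤ ‖(1 : A) + 1 + 1‖ + ‖(1 : A)‖ := norm_add_le _ _
      _ ≤ (‖(1 : A) + 1‖ + ‖(1 : A)‖) + ‖(1 : A)‖ := by
          have := norm_add_le ((1 : A) + 1) 1
          linarith
      _ ≤ ((‖(1 : A)‖ + ‖(1 : A)‖) + ‖(1 : A)‖) + ‖(1 : A)‖ := by
          have := norm_add_le (1 : A) 1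
          linarith
      _ ≤ 4 := by linarith
  -- main invariant
  have key : ∀ k, ‖x k * x k - x k‖ ≤ ε * (1 / 2) ^ k ∧
      ‖x k - b‖ ≤ 10 * ε * (1 - (1 / 2) ^ k) := by
    intro k
    induction k with
    | zero => exact ⟨by rw [hx0]; simpa using hdef, by rw [hx0]; simp⟩
    | succ k ih =>
      obtain ⟨ih1, ih2⟩ := ih
      have hqk0 : (0 : ℝ) ≤ (1 / 2 : ℝ) ^ k := by positivity
      have hqk1 : ((1 / 2 : ℝ)) ^ k ≤ 1 := pow_le_one₀ (by norm_num) (by norm_num)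
      have hnx : ‖x k‖ ≤ 2 := by
        have h1 : ‖x k‖ ≤ ‖x k - b‖ + ‖b‖ := by
          have := norm_add_le (x k - b) b
          simpa using this
        nlinarith
      have hstep : ‖x (k + 1) - x k‖ ≤ 5 * (ε * (1 / 2) ^ k) := by
        rw [hxs, hid1]
        calc ‖(1 - (x k + x k)) * (x k * x k - x k)‖
            ≤ ‖1 - (x k + x k)‖ * ‖x k * x k - x k‖ := norm_mul_le _ _
          _ ≤ 5 * (ε * (1 / 2) ^ k) := by
              have hn1 : ‖(1 : A) - (x k + x k)‖ ≤ 5 := by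
                have := norm_sub_le (1 : A) (x k + x k)
                have := norm_add_le (x k) (x k)
                nlinarith [norm_nonneg (x k)]
              exact mul_le_mul hn1 ih1 (norm_nonneg _) (by norm_num)
      constructor
      · rw [hxs, hid2]
        have hA : ‖(x k + x k - 1) * (x k + x k - 1) - 4‖ ≤ 29 := by
          have h5 : ‖x k + x k - 1‖ ≤ 5 := by
            have h51 := norm_sub_le (x k + x k) (1 : A)
            have h52 := norm_add_le (x k) (x k)
            nlinarith
          calc ‖(x k + x k - 1) * (x k + x k - 1) - 4‖
              ≤ ‖(x k + x k - 1) * (x k + x k - 1)‖ + ‖(4 : A)‖ := norm_sub_le _ _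
            _ ≤ ‖x k + x k - 1‖ * ‖x k + x k - 1‖ + 4 := by
                have := norm_mul_le (x k + x k - 1) (x k + x k - 1)
                linarith
            _ ≤ 29 := by nlinarith [norm_nonneg (x k + x k - 1)]
        calc ‖((x k + x k - 1) * (x k + x k - 1) - 4) * ((x k * x k - x k) * (x k * x k - x k))‖
            ≤ ‖(x k + x k - 1) * (x k + x k - 1) - 4‖ * ‖(x k * x k - x k) * (x k * x k - x k)‖ :=
              norm_mul_le _ _
          _ ≤ 29 * (‖x k * x k - x k‖ * ‖x k * x k - x k‖) := by
              have h1 := norm_mul_le (x k * x k - x k) (x k * x k - x k)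
              have h2 := norm_nonneg ((x k * x k - x k) * (x k * x k - x k))
              nlinarith [norm_nonneg (x k * x k - x k)]
          _ ≤ ε * (1 / 2) ^ (k + 1) := by
              rw [pow_succ]
              have hd0 := norm_nonneg (x k * x k - x k)
              have hdd : ‖x k * x k - x k‖ * ‖x k * x k - x k‖ ≤
                  (ε * (1 / 2) ^ k) * (ε * (1 / 2) ^ k) :=
                mul_le_mul ih1 ih1 hd0 (by positivity)
              have hεq : ε * (1 / 2) ^ k ≤ 1 / 1000 :=
                le_trans (mul_le_of_le_one_right h0 hqk1) hεs
              nlinarith [mul_nonneg h0 hqk0]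
      · have h1 : ‖x (k + 1) - b‖ ≤ ‖x (k + 1) - x k‖ + ‖x k - b‖ := by
          have := norm_add_le (x (k + 1) - x k) (x k - b)
          simpa using this
        have h2 : (5 : ℝ) * (ε * (1 / 2) ^ k) + 10 * ε * (1 - (1 / 2) ^ k) =
            10 * ε * (1 - (1 / 2) ^ (k + 1)) := by
          rw [pow_succ]
          ring
        linarith
  -- convergence
  have hstep' : ∀ k, ‖x (k + 1) - x k‖ ≤ 5 * ε * (1 / 2) ^ k := by
    intro k
    obtain ⟨ih1, ih2⟩ := key k
    have hqk0 : (0 : ℝ) ≤ (1 / 2 : ℝ) ^ k := by positivity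
    have hqk1 : ((1 / 2 : ℝ)) ^ k ≤ 1 := pow_le_one₀ (by norm_num) (by norm_num)
    have hnx : ‖x k‖ ≤ 2 := by
      have h1 : ‖x k‖ ≤ ‖x k - b‖ + ‖b‖ := by
        have := norm_add_le (x k - b) b
        simpa using this
      nlinarith
    rw [hxs, hid1]
    calc ‖(1 - (x k + x k)) * (x k * x k - x k)‖
        ≤ ‖1 - (x k + x k)‖ * ‖x k * x k - x k‖ := norm_mul_le _ _
      _ ≤ 5 * ε * (1 / 2) ^ k := by
          have hn1 : ‖(1 : A) - (x k + x k)‖ ≤ 5 := by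
            have := norm_sub_le (1 : A) (x k + x k)
            have := norm_add_le (x k) (x k)
            nlinarith [norm_nonneg (x k)]
          have h2 : ‖1 - (x k + x k)‖ * ‖x k * x k - x k‖ ≤ 5 * (ε * (1 / 2) ^ k) :=
            mul_le_mul hn1 ih1 (norm_nonneg _) (by norm_num)
          linarith
  have hcauchy : CauchySeq x := by
    apply cauchySeq_of_le_geometric (1 / 2) (5 * ε) (by norm_num)
    intro k
    rw [dist_eq_norm, norm_sub_rev]
    exact hstep' k
  obtain ⟨r, hr⟩ := cauchySeq_tendsto_of_complete hcauchy
  refine ⟨r, ?_, ?_, ?_⟩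
  · exact hP.mem_of_tendsto hr (Filter.Eventually.of_forall hmem)
  · have h1 : Tendsto (fun k => x k * x k - x k) atTop (nhds (r * r - r)) :=
      (hr.mul hr).sub hr
    have h2 : Tendsto (fun k => x k * x k - x k) atTop (nhds 0) := by
      rw [tendsto_zero_iff_norm_tendsto_zero]
      have hpow : Tendsto (fun k : ℕ => ε * (1 / 2) ^ k) atTop (nhds 0) := by
        have := tendsto_pow_atTop_nhds_zero_of_lt_one (by norm_num : (0:ℝ) ≤ 1/2)
          (by norm_num : (1/2:ℝ) < 1)
        simpa using this.const_mul ε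
      exact squeeze_zero (fun k => norm_nonneg _) (fun k => (key k).1) hpow
    have := tendsto_nhds_unique h1 h2
    exact sub_eq_zero.mp this
  · have h1 : Tendsto (fun k => ‖x k - b‖) atTop (nhds ‖r - b‖) :=
      ((hr.sub tendsto_const_nhds).norm)
    apply le_of_tendsto h1
    apply Filter.Eventually.of_forall
    intro k
    have hqk0 : (0 : ℝ) ≤ (1 / 2 : ℝ) ^ k := by positivity
    have := (key k).2
    nlinarith

end NewtonAux

/-- if a finite-index conditional expectation `E : A → P` is
approximately representable and `P` is simple, then the inclusion `P ⊆ A` is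
irreducible (`P' ∩ A ≅ ℂ`) and `A` is simple. -/
theorem approx_representable_simple_base_implies_irreducible_and_simple
    {A : Type*} [NormedRing A] [StarRing A] [CStarRing A] [NormedAlgebra ℂ A]
    [CompleteSpace A] [StarModule ℂ A] [PartialOrder A] [StarOrderedRing A]
    (P : StarSubalgebra ℂ A) (E : A → A) (hE : IsCondExp P E)
    {n : ℕ} (u v : Fin n → A) (hq : IsQuasiBasis E u v)
    {Ainf : Type*} [Ring Ainf] [StarRing Ainf] [Algebra ℂ Ainf] (S : SeqAlg A Ainf)
    -- the projection `e ∈ P_∞` approximately representing `E`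
    (e : Ainf) (he_rep : ∃ a : ℕ → A, IsBddSeq a ∧ (∀ n, a n ∈ P) ∧ S.q a = e)
    (he_idem : e * e = e) (he_star : star e = e)
    (he_comm : ∀ p ∈ P, Commute e (S.incl p))
    (he_repE : ∀ x : A, e * S.incl x * e = S.incl (E x) * e)
    (he_inj : ∀ y ∈ P, S.incl y * e = 0 → y = 0)
    -- `P` is simple
    (hPsimple : IsSimpleCStarAlgebra ↥P) :
    (∀ x : A, (∀ p ∈ P, Commute x p) → ∃ c : ℂ, x = c • (1 : A)) ∧
      IsSimpleCStarAlgebra A := by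
  by_cases htriv : Subsingleton A
  · constructor
    · exact fun x _ => ⟨0, Subsingleton.elim _ _⟩
    · intro I _
      left
      refine TwoSidedIdeal.ext fun x => ?_
      rw [TwoSidedIdeal.mem_bot]
      have hx0 : x = 0 := Subsingleton.elim _ _
      exact ⟨fun _ => hx0, fun _ => hx0 ▸ I.zero_mem⟩
  haveI : Nontrivial A := not_subsingleton_iff_nontrivial.mp htriv
  obtain ⟨a, ha_bdd, haP, hqa⟩ := he_rep
  -- the "strip-off" lemma:  y · e = 0  implies  y = 0, for all y ∈ A.
  have strip : ∀ y : A, S.incl y * e = 0 → y = 0 := by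
    intro y hy
    have hEv : ∀ i : Fin n, E (v i * y) = 0 := by
      intro i
      apply he_inj _ (hE.mem _)
      have h1 : e * S.incl (v i * y) * e = 0 := by
        rw [S.incl_mul]
        calc e * (S.incl (v i) * S.incl y) * e
            = (e * S.incl (v i)) * (S.incl y * e) := by
              rw [← mul_assoc, mul_assoc]
          _ = 0 := by rw [hy, mul_zero]
      rw [← he_repE]
      exact h1
    calc y = ∑ i, u i * E (v i * y) := (hq y).1
      _ = 0 := by
          apply Finset.sum_eq_zero
          intro i _
          rw [hEv i, mul_zero]
  -- a does not tend to zero in norm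
  have h_e_ne : ¬ Tendsto (fun k => ‖a k‖) atTop (nhds 0) := by
    intro h
    have he0 : e = 0 := by
      rw [← hqa]
      exact (S.q_eq_zero_iff a ha_bdd).mpr h
    have h1 : S.incl (1 : A) * e = 0 := by rw [he0, mul_zero]
    exact one_ne_zero (he_inj 1 (one_mem P) h1)
  -- PART 1 : irreducibility
  have part1 : ∀ x : A, (∀ p ∈ P, Commute x p) → ∃ c : ℂ, x = c • (1 : A) := by
    intro x hx
    have hcomm : S.incl x * e = e * S.incl x := by
      rw [← hqa, SeqAlg.incl, ← S.q_mul _ _ (IsBddSeq.const x) ha_bdd,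
        ← S.q_mul _ _ ha_bdd (IsBddSeq.const x)]
      congr 1
      funext k
      exact (hx (a k) (haP k)).eq
    have hxE : x = E x := by
      have h1 : S.incl x * e = S.incl (E x) * e := by
        calc S.incl x * e = S.incl x * (e * e) := by rw [he_idem]
          _ = (S.incl x * e) * e := by rw [mul_assoc]
          _ = (e * S.incl x) * e := by rw [hcomm]
          _ = S.incl (E x) * e := he_repE x
      have h2 : S.incl (x - E x) * e = 0 := by
        rw [S.incl_sub, sub_mul, h1, sub_self]
      exact sub_eq_zero.mp (strip _ h2)
    have hxP : x ∈ P := hxE ▸ hE.mem x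
    obtain ⟨lam, hlam⟩ := spectrum.nonempty x
    refine ⟨lam, ?_⟩
    set z : A := x - lam • 1 with hz
    have hzP : z ∈ P := sub_mem hxP (SMulMemClass.smul_mem lam (one_mem P))
    set RA : Set A := (fun w => z * w) '' (P : Set A) with hRA
    have hzcomm : ∀ w ∈ P, z * w = w * z := by
      intro w hw
      rw [hz, sub_mul, mul_sub, (hx w hw).eq, smul_mul_assoc, mul_smul_comm, one_mul, mul_one]
    -- the closed two-sided ideal of P generated by z
    let J : TwoSidedIdeal ↥P := TwoSidedIdeal.mk' {p : ↥P | (p : A) ∈ closure RA}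
      (by
        show ((0 : ↥P) : A) ∈ closure RA
        exact subset_closure ⟨0, zero_mem P, by simp⟩)
      (by
        intro p q hp hq
        show ((p : A) + (q : A)) ∈ closure RA
        refine map_mem_closure₂ continuous_add hp hq ?_
        rintro w ⟨w0, hw0, rfl⟩ w' ⟨w0', hw0', rfl⟩
        exact ⟨w0 + w0', add_mem hw0 hw0', by simp [mul_add]⟩)
      (by
        intro p hp
        show (-(p : A)) ∈ closure RA
        refine map_mem_closure continuous_neg hp ?_
        rintro w ⟨w0, hw0, rfl⟩
        exact ⟨-w0, neg_mem hw0, by simp⟩)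
      (by
        intro c p hp
        show ((c : A) * (p : A)) ∈ closure RA
        refine map_mem_closure (f := fun w => (c : A) * w)
          (continuous_const.mul continuous_id) hp ?_
        rintro w ⟨w0, hw0, rfl⟩
        refine ⟨(c : A) * w0, mul_mem c.2 hw0, ?_⟩
        show z * ((c : A) * w0) = (c : A) * (z * w0)
        rw [← mul_assoc, hzcomm _ c.2, mul_assoc])
      (by
        intro p c hp
        show ((p : A) * (c : A)) ∈ closure RA
        refine map_mem_closure (f := fun w => w * (c : A))
          (continuous_id.mul continuous_const) hp ?_
        rintro w ⟨w0, hw0, rfl⟩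
        exact ⟨w0 * (c : A), mul_mem hw0 c.2, by simp [mul_assoc]⟩)
    have hJclosed : IsClosed (J : Set ↥P) := by
      rw [TwoSidedIdeal.coe_mk']
      exact IsClosed.preimage continuous_subtype_val isClosed_closure
    rcases hPsimple J hJclosed with hbot | htop
    · have hzJ : (⟨z, hzP⟩ : ↥P) ∈ J := by
        rw [TwoSidedIdeal.mem_mk']
        exact subset_closure ⟨1, one_mem P, by simp⟩
      rw [hbot, TwoSidedIdeal.mem_bot] at hzJ
      have hz0 : z = 0 := congrArg Subtype.val hzJ
      rw [hz] at hz0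
      exact sub_eq_zero.mp hz0
    · exfalso
      have h1J : (1 : ↥P) ∈ J := by rw [htop]; exact TwoSidedIdeal.mem_top _
      rw [TwoSidedIdeal.mem_mk'] at h1J
      have h1A : (1 : A) ∈ closure RA := h1J
      obtain ⟨w, hwRA, hw⟩ := Metric.mem_closure_iff.mp h1A 1 one_pos
      obtain ⟨w0, hw0P, rfl⟩ := hwRA
      have hnorm : ‖(1 : A) - z * w0‖ < 1 := by rwa [dist_eq_norm] at hw
      have hU : IsUnit (z * w0) := by
        have := isUnit_one_sub_of_norm_lt_one hnorm
        simpa using this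
      have hzUnit : IsUnit z := isUnit_of_commute_mul (hzcomm w0 hw0P) hU
      rw [spectrum.mem_iff] at hlam
      apply hlam
      have heq : (algebraMap ℂ A) lam - x = -z := by
        rw [hz, Algebra.algebraMap_eq_smul_one, neg_sub]
      rw [heq]
      exact hzUnit.neg
  -- PART 2 : simplicity of A
  letI : CStarAlgebra A :=
    { toNormedRing := ‹_›, toStarRing := ‹_›, toCompleteSpace := ‹_›,
      toCStarRing := ‹_›, toNormedAlgebra := ‹_›, toStarModule := ‹_› }
  -- basic calculus for E
  have hE0 : E 0 = 0 := by
    have h := hE.map_add 0 0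
    rw [add_zero] at h
    exact (left_eq_add.mp h)
  have hEneg : ∀ x : A, E (-x) = -E x := by
    intro x
    have h := hE.map_smul (-1) x
    rw [neg_one_smul, neg_one_smul] at h
    exact h
  have hEsub : ∀ x y : A, E (x - y) = E x - E y := by
    intro x y
    rw [sub_eq_add_neg, hE.map_add, hEneg, sub_eq_add_neg]
  have hEpos : ∀ x : A, 0 ≤ x → 0 ≤ E x := by
    intro x hx
    rw [StarOrderedRing.nonneg_iff] at hx
    refine AddSubmonoid.closure_induction (motive := fun w _ => 0 ≤ E w) ?_ ?_ ?_ hx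
    · rintro w ⟨s, rfl⟩
      exact hE.pos s
    · show (0:A) ≤ E 0
      rw [hE0]
    · intro y z _ _ h1 h2
      rw [hE.map_add]
      exact add_nonneg h1 h2
  have hEmono : ∀ x y : A, x ≤ y → E x ≤ E y := by
    intro x y h
    have h1 := hEpos _ (sub_nonneg.mpr h)
    rw [hEsub] at h1
    exact sub_nonneg.mp h1
  have hE1 : E 1 = 1 := hE.fix 1 (one_mem P)
  have hEalg : ∀ c : ℝ, E ((algebraMap ℝ A) c) = (algebraMap ℝ A) c := by
    intro c
    rw [Algebra.algebraMap_eq_smul_one, ← Complex.coe_smul, hE.map_smul, hE1]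
  have hEsa : ∀ h : A, IsSelfAdjoint h → ‖E h‖ ≤ 3 * ‖h‖ := by
    intro h hsa
    have hub : E h ≤ algebraMap ℝ A ‖h‖ := by
      have h1 := hEmono _ _ hsa.le_algebraMap_norm_self
      rwa [hEalg] at h1
    have hlb : -(algebraMap ℝ A ‖h‖) ≤ E h := by
      calc -(algebraMap ℝ A ‖h‖) = E (-(algebraMap ℝ A ‖h‖)) := by rw [hEneg, hEalg]
        _ ≤ E h := hEmono _ _ hsa.neg_algebraMap_norm_le_self
    have h0 : 0 ≤ E h + algebraMap ℝ A ‖h‖ := by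
      have h1 := add_le_add_left hlb (algebraMap ℝ A ‖h‖)
      rwa [neg_add_cancel] at h1
    have h1 : E h + algebraMap ℝ A ‖h‖ ≤ algebraMap ℝ A (2 * ‖h‖) := by
      have h2 := add_le_add_left hub (algebraMap ℝ A ‖h‖)
      calc E h + algebraMap ℝ A ‖h‖ ≤ algebraMap ℝ A ‖h‖ + algebraMap ℝ A ‖h‖ := h2
        _ = algebraMap ℝ A (2 * ‖h‖) := by rw [two_mul, map_add]
    have h2 : ‖E h + algebraMap ℝ A ‖h‖‖ ≤ ‖algebraMap ℝ A (2 * ‖h‖)‖ :=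
      CStarAlgebra.norm_le_norm_of_nonneg_of_le h0 h1
    have halg : ∀ c : ℝ, ‖algebraMap ℝ A c‖ ≤ |c| := by
      intro c
      rw [Algebra.algebraMap_eq_smul_one, norm_smul, norm_one, mul_one]
      exact le_of_eq (Real.norm_eq_abs c)
    have h3 : ‖E h‖ ≤ ‖E h + algebraMap ℝ A ‖h‖‖ + ‖algebraMap ℝ A ‖h‖‖ := by
      have h4 := norm_add_le (E h + algebraMap ℝ A ‖h‖) (-(algebraMap ℝ A ‖h‖))
      rw [add_neg_cancel_right, norm_neg] at h4
      exact h4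
    have h4 := halg (2 * ‖h‖)
    have h5 := halg ‖h‖
    have hn := norm_nonneg h
    rw [abs_of_nonneg hn] at h5
    rw [abs_of_nonneg (by positivity)] at h4
    linarith
  have hEbdd : ∀ x : A, ‖E x‖ ≤ 6 * ‖x‖ := by
    intro x
    have hsa1 : IsSelfAdjoint (x + star x) := by
      rw [IsSelfAdjoint, star_add, star_star, add_comm]
    have hsa2 : IsSelfAdjoint (Complex.I • (star x - x)) := by
      rw [IsSelfAdjoint, star_smul, star_sub, star_star, Complex.star_def, Complex.conj_I,
        neg_smul, ← smul_neg, neg_sub]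
    have hIh : Complex.I • (Complex.I • (star x - x)) = x - star x := by
      rw [smul_smul, Complex.I_mul_I, neg_one_smul, neg_sub]
    have hd : x = (2⁻¹ : ℂ) • ((x + star x) + Complex.I • (Complex.I • (star x - x))) := by
      rw [hIh]
      have h6 : (x + star x) + (x - star x) = (2 : ℂ) • x := by
        rw [two_smul]
        abel
      rw [h6, smul_smul]
      norm_num
    have hEx : E x = (2⁻¹ : ℂ) • (E (x + star x) + Complex.I • E (Complex.I • (star x - x))) := by
      conv_lhs => rw [hd]
      rw [hE.map_smul, hE.map_add, hE.map_smul]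
    rw [hEx]
    have hn1 : ‖E (x + star x)‖ ≤ 3 * ‖x + star x‖ := hEsa _ hsa1
    have hn2 : ‖E (Complex.I • (star x - x))‖ ≤ 3 * ‖Complex.I • (star x - x)‖ := hEsa _ hsa2
    have hh1 : ‖x + star x‖ ≤ 2 * ‖x‖ := by
      have h7 := norm_add_le x (star x)
      rw [norm_star] at h7
      linarith
    have hh2 : ‖Complex.I • (star x - x)‖ ≤ 2 * ‖x‖ := by
      rw [norm_smul, Complex.norm_I, one_mul]
      have h7 := norm_sub_le (star x) x
      rw [norm_star] at h7
      linarith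
    have hni : ‖Complex.I • E (Complex.I • (star x - x))‖ = ‖E (Complex.I • (star x - x))‖ := by
      rw [norm_smul, Complex.norm_I, one_mul]
    calc ‖(2⁻¹ : ℂ) • (E (x + star x) + Complex.I • E (Complex.I • (star x - x)))‖
        = 2⁻¹ * ‖E (x + star x) + Complex.I • E (Complex.I • (star x - x))‖ := by
          rw [norm_smul]
          norm_num
      _ ≤ 2⁻¹ * (‖E (x + star x)‖ + ‖E (Complex.I • (star x - x))‖) := by
          have h8 := norm_add_le (E (x + star x)) (Complex.I • E (Complex.I • (star x - x)))
          rw [hni] at h8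
          linarith
      _ ≤ 6 * ‖x‖ := by linarith
  -- P is a closed subset of A
  have hPclosed : IsClosed (P : Set A) := by
    have hlip : LipschitzWith 6 E := by
      apply LipschitzWith.of_dist_le_mul
      intro x y
      rw [dist_eq_norm, dist_eq_norm, ← hEsub]
      have h9 := hEbdd (x - y)
      simpa using h9
    have hset : (P : Set A) = (fun w => E w - w) ⁻¹' {0} := by
      ext w
      simp only [Set.mem_preimage, Set.mem_singleton_iff, sub_eq_zero, SetLike.mem_coe]
      exact ⟨fun hw => hE.fix w hw, fun hw => hw ▸ hE.mem w⟩
    rw [hset]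
    exact isClosed_singleton.preimage ((hlip.continuous).sub continuous_id)
  refine ⟨part1, ?_⟩
  -- start of the simplicity proof
  intro I hIclosed
  by_cases hIbot : ∀ w : A, w ∈ I → w = 0
  · left
    refine TwoSidedIdeal.ext fun w => ?_
    rw [TwoSidedIdeal.mem_bot]
    exact ⟨hIbot w, fun hw => hw ▸ I.zero_mem⟩
  right
  push_neg at hIbot
  obtain ⟨x₀, hx₀I, hx₀⟩ := hIbot
  -- some element of I with nonzero E-value
  have hEI : ∃ w : A, w ∈ I ∧ E w ≠ 0 := by
    by_contra hc
    push_neg at hc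
    apply hx₀
    calc x₀ = ∑ i, u i * E (v i * x₀) := (hq x₀).1
      _ = 0 := by
          apply Finset.sum_eq_zero
          intro i _
          rw [hc (v i * x₀) (I.mul_mem_left _ _ hx₀I), mul_zero]
  obtain ⟨w0, hw0I, hw0⟩ := hEI
  -- the closure of E(I) is a closed two-sided ideal of P
  set DA : Set A := {w : A | ∃ y, y ∈ I ∧ E y = w} with hDA
  let J2 : TwoSidedIdeal ↥P := TwoSidedIdeal.mk' {p : ↥P | (p : A) ∈ closure DA}
    (by
      show ((0 : ↥P) : A) ∈ closure DA
      have : (0 : A) ∈ DA := ⟨0, I.zero_mem, hE0⟩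
      simpa using subset_closure this)
    (by
      intro p q hp hq'
      show ((p : A) + (q : A)) ∈ closure DA
      refine map_mem_closure₂ continuous_add hp hq' ?_
      rintro w ⟨y, hy, rfl⟩ w' ⟨y', hy', rfl⟩
      exact ⟨y + y', I.add_mem hy hy', hE.map_add y y'⟩)
    (by
      intro p hp
      show (-(p : A)) ∈ closure DA
      refine map_mem_closure continuous_neg hp ?_
      rintro w ⟨y, hy, rfl⟩
      exact ⟨-y, I.neg_mem hy, hEneg y⟩)
    (by
      intro c p hp
      show ((c : A) * (p : A)) ∈ closure DA
      refine map_mem_closure (f := fun w => (c : A) * w)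
        (continuous_const.mul continuous_id) hp ?_
      rintro w ⟨y, hy, rfl⟩
      refine ⟨(c : A) * y, I.mul_mem_left _ _ hy, ?_⟩
      have hb := hE.bimod (c : A) c.2 1 (one_mem P) y
      rw [mul_one, mul_one] at hb
      exact hb)
    (by
      intro p c hp
      show ((p : A) * (c : A)) ∈ closure DA
      refine map_mem_closure (f := fun w => w * (c : A))
        (continuous_id.mul continuous_const) hp ?_
      rintro w ⟨y, hy, rfl⟩
      refine ⟨y * (c : A), I.mul_mem_right _ _ hy, ?_⟩
      have hb := hE.bimod 1 (one_mem P) (c : A) c.2 y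
      rw [one_mul, one_mul] at hb
      exact hb)
  have hJ2closed : IsClosed (J2 : Set ↥P) := by
    rw [TwoSidedIdeal.coe_mk']
    exact IsClosed.preimage continuous_subtype_val isClosed_closure
  have h1A : (1 : A) ∈ closure DA := by
    rcases hPsimple J2 hJ2closed with hbot | htop
    · exfalso
      have hmem : (⟨E w0, hE.mem w0⟩ : ↥P) ∈ J2 := by
        rw [TwoSidedIdeal.mem_mk']
        exact subset_closure ⟨w0, hw0I, rfl⟩
      rw [hbot, TwoSidedIdeal.mem_bot] at hmem
      exact hw0 (congrArg Subtype.val hmem)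
    · have h1J : (1 : ↥P) ∈ J2 := by rw [htop]; exact TwoSidedIdeal.mem_top _
      rw [TwoSidedIdeal.mem_mk'] at h1J
      exact h1J
  obtain ⟨wE, hwE, hwEdist⟩ := Metric.mem_closure_iff.mp h1A (1 / 2) (by norm_num)
  obtain ⟨i1, hi1I, rfl⟩ := hwE
  have hEnear : ‖(1 : A) - E i1‖ < 1 / 2 := by rwa [dist_eq_norm] at hwEdist
  have hUnit : IsUnit (E i1) := by
    have h10 := isUnit_one_sub_of_norm_lt_one (lt_trans hEnear (by norm_num))
    simpa using h10
  obtain ⟨uu, huu⟩ := hUnit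
  -- the approximating sequence in I
  set j : ℕ → A := fun k => ((uu⁻¹ : Aˣ) : A) * (a k * i1 * a k) with hj
  have hjI : ∀ k, j k ∈ I := by
    intro k
    exact I.mul_mem_left _ _ (I.mul_mem_right _ _ (I.mul_mem_left _ _ hi1I))
  have hrel : Tendsto (fun k => ‖E i1 * a k - a k * i1 * a k‖) atTop (nhds 0) := by
    have hq1 : S.q (fun k => E i1 * a k) = S.q (fun k => a k * i1 * a k) := by
      have e1 : S.q (fun k => E i1 * a k) = S.incl (E i1) * e := by
        rw [SeqAlg.incl, ← hqa, ← S.q_mul _ _ (IsBddSeq.const (E i1)) ha_bdd]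
        rfl
      have e2 : S.q (fun k => a k * i1 * a k) = e * S.incl i1 * e := by
        rw [SeqAlg.incl, ← hqa, ← S.q_mul _ _ ha_bdd (IsBddSeq.const i1),
          ← S.q_mul _ _ (ha_bdd.mul (IsBddSeq.const i1)) ha_bdd]
        rfl
      rw [e1, e2, he_repE]
    exact S.tendsto_of_q_eq ((IsBddSeq.const (E i1)).mul ha_bdd)
      ((ha_bdd.mul (IsBddSeq.const i1)).mul ha_bdd) hq1
  have hdist : Tendsto (fun k => ‖a k - j k‖) atTop (nhds 0) := by
    have hbnd : ∀ k, ‖a k - j k‖ ≤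
        ‖((uu⁻¹ : Aˣ) : A)‖ * ‖E i1 * a k - a k * i1 * a k‖ := by
      intro k
      have heq : a k - j k = ((uu⁻¹ : Aˣ) : A) * (E i1 * a k - a k * i1 * a k) := by
        rw [hj, mul_sub]
        congr 1
        rw [← mul_assoc, ← huu, uu.inv_mul, one_mul]
      rw [heq]
      exact norm_mul_le _ _
    have h11 := hrel.const_mul ‖((uu⁻¹ : Aˣ) : A)‖
    rw [mul_zero] at h11
    exact squeeze_zero (fun k => norm_nonneg _) hbnd h11
  -- the symmetrized sequence
  set a' : ℕ → A := fun k => (2⁻¹ : ℂ) • (a k + star (a k)) with ha'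
  have ha'P : ∀ k, a' k ∈ P := by
    intro k
    exact SMulMemClass.smul_mem _ (add_mem (haP k) (star_mem (haP k)))
  have ha'sa : ∀ k, star (a' k) = a' k := by
    intro k
    rw [ha']
    simp only [star_smul, star_add, star_star]
    rw [add_comm (star (a k))]
    congr 1
    simp
  have hstar0 : Tendsto (fun k => ‖star (a k) - a k‖) atTop (nhds 0) := by
    have hq2 : S.q (star a) = S.q a := by
      calc S.q (star a) = star e := by rw [S.q_star a ha_bdd, hqa]
        _ = e := he_star
        _ = S.q a := hqa.symm
    exact S.tendsto_of_q_eq ha_bdd.star' ha_bdd hq2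
  have ha'diff : Tendsto (fun k => ‖a' k - a k‖) atTop (nhds 0) := by
    have hpt : ∀ k, a' k - a k = (2⁻¹ : ℂ) • (star (a k) - a k) := by
      intro k
      rw [ha']
      module
    have hbnd : ∀ k, ‖a' k - a k‖ ≤ 2⁻¹ * ‖star (a k) - a k‖ := by
      intro k
      rw [hpt k, norm_smul]
      gcongr
      norm_num
    have h11 := hstar0.const_mul (2⁻¹ : ℝ)
    rw [mul_zero] at h11
    exact squeeze_zero (fun k => norm_nonneg _) hbnd h11
  obtain ⟨C0, hC0⟩ := id ha_bdd
  set C : ℝ := max C0 0 with hCdef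
  have hC : ∀ k, ‖a k‖ ≤ C := fun k => (hC0 k).trans (le_max_left _ _)
  have hCpos : 0 ≤ C := le_max_right _ _
  have ha'C : ∀ k, ‖a' k‖ ≤ C := by
    intro k
    rw [ha']
    calc ‖(2⁻¹ : ℂ) • (a k + star (a k))‖ = 2⁻¹ * ‖a k + star (a k)‖ := by
          rw [norm_smul]; norm_num
      _ ≤ 2⁻¹ * (‖a k‖ + ‖a k‖) := by
          have h12 := norm_add_le (a k) (star (a k))
          rw [norm_star] at h12
          linarith
      _ ≤ C := by
          have := hC k
          linarith
  have hidem0 : Tendsto (fun k => ‖a k * a k - a k‖) atTop (nhds 0) := by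
    have hq3 : S.q (a * a) = S.q a := by
      calc S.q (a * a) = e * e := by rw [S.q_mul a a ha_bdd ha_bdd, hqa]
        _ = e := he_idem
        _ = S.q a := hqa.symm
    exact S.tendsto_of_q_eq (ha_bdd.mul ha_bdd) ha_bdd hq3
  have hidem' : Tendsto (fun k => ‖a' k * a' k - a' k‖) atTop (nhds 0) := by
    have hident : ∀ k, a' k * a' k - a' k =
        a' k * (a' k - a k) + (a' k - a k) * a k + (a k * a k - a k) - (a' k - a k) := by
      intro k
      noncomm_ring
    have hbnd : ∀ k, ‖a' k * a' k - a' k‖ ≤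
        C * ‖a' k - a k‖ + C * ‖a' k - a k‖ + ‖a k * a k - a k‖ + ‖a' k - a k‖ := by
      intro k
      rw [hident k]
      have t1 := norm_add_le (a' k * (a' k - a k)) ((a' k - a k) * a k)
      have t2 := norm_add_le (a' k * (a' k - a k) + (a' k - a k) * a k) (a k * a k - a k)
      have t3 := norm_sub_le
        (a' k * (a' k - a k) + (a' k - a k) * a k + (a k * a k - a k)) (a' k - a k)
      have m1 := norm_mul_le (a' k) (a' k - a k)
      have m2 := norm_mul_le (a' k - a k) (a k)
      have b1 : ‖a' k‖ * ‖a' k - a k‖ ≤ C * ‖a' k - a k‖ :=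
        mul_le_mul_of_nonneg_right (ha'C k) (norm_nonneg _)
      have b2 : ‖a' k - a k‖ * ‖a k‖ ≤ C * ‖a' k - a k‖ := by
        calc ‖a' k - a k‖ * ‖a k‖ ≤ ‖a' k - a k‖ * C :=
              mul_le_mul_of_nonneg_left (hC k) (norm_nonneg _)
          _ = C * ‖a' k - a k‖ := mul_comm _ _
      linarith
    have hlim : Tendsto (fun k =>
        C * ‖a' k - a k‖ + C * ‖a' k - a k‖ + ‖a k * a k - a k‖ + ‖a' k - a k‖)
        atTop (nhds 0) := by
      have t1 := ha'diff.const_mul C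
      rw [mul_zero] at t1
      have t2 := (t1.add t1).add hidem0
      rw [add_zero, add_zero] at t2
      have t3 := t2.add ha'diff
      rw [add_zero] at t3
      exact t3
    exact squeeze_zero (fun k => norm_nonneg _) hbnd hlim
  -- frequently bounded below in norm
  have hfreq : ∃ c > (0:ℝ), ∀ N : ℕ, ∃ k ≥ N, c ≤ ‖a k‖ := by
    by_contra hcon
    push_neg at hcon
    apply h_e_ne
    rw [Metric.tendsto_atTop]
    intro ε hε
    obtain ⟨N, hN⟩ := hcon ε hε
    refine ⟨N, fun k hk => ?_⟩
    rw [Real.dist_eq, sub_zero, abs_of_nonneg (norm_nonneg _)]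
    exact hN k hk
  obtain ⟨c, hcpos, hfreq⟩ := hfreq
  set δ : ℝ := min (1/1000) (c/8) with hδdef
  have hδpos : 0 < δ := lt_min (by norm_num) (by positivity)
  have hδ1 : δ ≤ 1/1000 := min_le_left _ _
  have hδc : δ ≤ c/8 := min_le_right _ _
  obtain ⟨N1, hN1⟩ := (Metric.tendsto_atTop.mp hidem') δ hδpos
  obtain ⟨N2, hN2⟩ := (Metric.tendsto_atTop.mp ha'diff) δ hδpos
  obtain ⟨N3, hN3⟩ := (Metric.tendsto_atTop.mp hdist) δ hδpos
  obtain ⟨k, hk, hck⟩ := hfreq (max N1 (max N2 N3))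
  have hk1 : ‖a' k * a' k - a' k‖ < δ := by
    have h13 := hN1 k (le_trans (le_max_left _ _) hk)
    rwa [Real.dist_eq, sub_zero, abs_of_nonneg (norm_nonneg _)] at h13
  have hk2 : ‖a' k - a k‖ < δ := by
    have h13 := hN2 k (le_trans (le_trans (le_max_left _ _) (le_max_right N1 _)) hk)
    rwa [Real.dist_eq, sub_zero, abs_of_nonneg (norm_nonneg _)] at h13
  have hk3 : ‖a k - j k‖ < δ := by
    have h13 := hN3 k (le_trans (le_trans (le_max_right _ _) (le_max_right N1 _)) hk)
    rwa [Real.dist_eq, sub_zero, abs_of_nonneg (norm_nonneg _)] at h13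
  set b : A := a' k with hbdef
  have hbP : b ∈ P := ha'P k
  have hbsa : star b = b := ha'sa k
  have hbsq : ‖b * b‖ = ‖b‖ * ‖b‖ := by
    nth_rewrite 2 [← hbsa]
    exact CStarRing.norm_self_mul_star (x := b)
  have hblow : 1/2 ≤ ‖b‖ := by
    by_contra hcon
    push_neg at hcon
    have h14 : ‖b‖ - ‖b‖ * ‖b‖ ≤ δ := by
      have h15 : ‖b‖ - ‖b * b‖ ≤ ‖b - b * b‖ := norm_sub_norm_le _ _
      rw [hbsq, norm_sub_rev] at h15
      linarith [hk1]
    have h16 : 7 * c / 8 ≤ ‖b‖ := by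
      have h17 : ‖a k‖ - ‖b‖ ≤ ‖a k - b‖ := norm_sub_norm_le _ _
      rw [norm_sub_rev] at h17
      have h18 : ‖b - a k‖ < c/8 := lt_of_lt_of_le hk2 hδc
      linarith
    nlinarith [norm_nonneg b]
  have hbhigh : ‖b‖ ≤ 3/2 := by
    by_contra hcon
    push_neg at hcon
    have h14 : ‖b * b‖ - ‖b‖ ≤ ‖b * b - b‖ := norm_sub_norm_le _ _
    rw [hbsq] at h14
    nlinarith [hk1]
  have hone : ‖(1 : A)‖ ≤ 1 := le_of_eq norm_one
  have hbb : ‖b * b - b‖ ≤ 1/1000 := le_trans hk1.le hδ1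
  obtain ⟨r, hrP, hridem, hrclose⟩ :=
    newton_idem P hPclosed hone hbP (by norm_num : (0:ℝ) ≤ 1/1000) le_rfl hbb hbhigh
  have hrne : r ≠ 0 := by
    intro h0
    rw [h0, zero_sub, norm_neg] at hrclose
    linarith
  have hrI : r ∈ I := by
    apply idem_mem_of_close I hIclosed (hjI k) hridem
    have h19 : r - j k = (r - b) + (b - a k) + (a k - j k) := by abel
    have t1 := norm_add_le ((r - b) + (b - a k)) (a k - j k)
    have t2 := norm_add_le (r - b) (b - a k)
    rw [h19]
    have h20 : δ ≤ 1/1000 := hδ1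
    calc ‖r - b + (b - a k) + (a k - j k)‖
        ≤ ‖r - b‖ + ‖b - a k‖ + ‖a k - j k‖ := by linarith
      _ < 1 := by linarith [hk2, hk3]
  -- the ideal P ∩ I of P
  let K : TwoSidedIdeal ↥P := TwoSidedIdeal.mk' {p : ↥P | (p : A) ∈ I}
    (by
      show ((0 : ↥P) : A) ∈ I
      simpa using I.zero_mem)
    (by
      intro p q hp hq'
      show ((p : A) + (q : A)) ∈ I
      exact I.add_mem hp hq')
    (by
      intro p hp
      show (-(p : A)) ∈ I
      exact I.neg_mem hp)
    (by
      intro c p hp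
      show ((c : A) * (p : A)) ∈ I
      exact I.mul_mem_left _ _ hp)
    (by
      intro p c hp
      show ((p : A) * (c : A)) ∈ I
      exact I.mul_mem_right _ _ hp)
  have hKclosed : IsClosed (K : Set ↥P) := by
    rw [TwoSidedIdeal.coe_mk']
    exact IsClosed.preimage continuous_subtype_val hIclosed
  rcases hPsimple K hKclosed with hKbot | hKtop
  · exfalso
    have hmem : (⟨r, hrP⟩ : ↥P) ∈ K := by
      rw [TwoSidedIdeal.mem_mk']
      exact hrI
    rw [hKbot, TwoSidedIdeal.mem_bot] at hmem
    exact hrne (congrArg Subtype.val hmem)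
  · have h1I : (1 : A) ∈ I := by
      have h1K : (1 : ↥P) ∈ K := by rw [hKtop]; exact TwoSidedIdeal.mem_top _
      rw [TwoSidedIdeal.mem_mk'] at h1K
      simpa using h1K
    refine TwoSidedIdeal.ext fun w => ?_
    refine ⟨fun _ => TwoSidedIdeal.mem_top _, fun _ => ?_⟩
    have := I.mul_mem_left w 1 h1I
    rwa [mul_one] at this
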